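/- arXiv:1909.06730 — 2 statements merged into one kernel-verified Lean document; each statement's English description precedes it below -/
import Mathlib

section
/- Let θ* , θ_real, v ∈ ℝ and σ, ξ, θmin > 0 with ξ < (1/2)θmin − σ. Suppose |θ_real| ≥ θmin, |v| < (1/2)θmin, and θ* satisfies θ* + ((−|θ*| + √(θ*² + 4σ²))/2)·z = θ_real + v for some z with |z| ≤ 1. Then |θ*| > ξ. -/
theorem no_false_negative (θs θreal v σ ξ θmin : ℝ) (z : ℝ)
    (hσ : 0 < σ) (hξ : 0 < ξ) (hθmin : 0 < θmin)
    (hξσ : ξ < (1 / 2) * θmin - σ)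
    (hreal : θmin ≤ |θreal|) (hv : |v| < (1 / 2) * θmin)
    (hz : |z| ≤ 1)
    (heq : θs + ((-|θs| + Real.sqrt (θs ^ 2 + 4 * σ ^ 2)) / 2) * z = θreal + v) :
    ξ < |θs| := by
  set s := Real.sqrt (θs ^ 2 + 4 * σ ^ 2) with hs
  have hs1 : s ≤ |θs| + 2 * σ := by
    rw [hs]
    have h2 : θs ^ 2 + 4 * σ ^ 2 ≤ (|θs| + 2 * σ) ^ 2 := by
      have := abs_nonneg θs
      nlinarith [sq_abs θs]
    calc Real.sqrt (θs ^ 2 + 4 * σ ^ 2) ≤ Real.sqrt ((|θs| + 2 * σ) ^ 2) :=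
          Real.sqrt_le_sqrt h2
      _ = |θs| + 2 * σ := by
          rw [Real.sqrt_sq (by positivity)]
  have hs0 : |θs| ≤ s := by
    rw [hs]
    calc |θs| = Real.sqrt (θs ^ 2) := by rw [Real.sqrt_sq_eq_abs]
      _ ≤ _ := Real.sqrt_le_sqrt (by nlinarith)
  set w := (-|θs| + s) / 2 with hw
  have hw0 : 0 ≤ w := by rw [hw]; linarith
  have hw1 : w ≤ σ := by rw [hw]; linarith
  have habs : |w * z| ≤ σ := by
    rw [abs_mul, abs_of_nonneg hw0]
    calc w * |z| ≤ σ * 1 := by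
          apply mul_le_mul hw1 hz (abs_nonneg z) hσ.le
      _ = σ := mul_one σ
  have h1 : |θs + w * z| ≤ |θs| + σ := (abs_add_le _ _).trans (by linarith)
  have h2 : (1 / 2) * θmin ≤ |θreal + v| := by
    have h3 : |θreal| ≤ |θreal + v| + |v| := by
      calc |θreal| = |(θreal + v) + (-v)| := by ring_nf
        _ ≤ |θreal + v| + |(-v)| := abs_add_le _ _
        _ = |θreal + v| + |v| := by rw [abs_neg]
    linarith
  rw [heq] at h1
  linarith
end

section
/- Let θ* , v ∈ ℝ, σ > 0, ξ > 0, and suppose θ_real = 0, |v| < ξ, and θ* + ((−|θ*| + √(θ*² + 4σ²))/2)·z = v where z = sign(θ*) when θ* ≠ 0. Then |θ*| ≤ ξ. -/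
theorem no_false_positive (θs v σ ξ : ℝ) (z : ℝ)
    (hσ : 0 < σ) (hξ : 0 < ξ) (hv : |v| < ξ)
    (hz : θs ≠ 0 → z = Real.sign θs)
    (heq : θs + ((-|θs| + Real.sqrt (θs ^ 2 + 4 * σ ^ 2)) / 2) * z = v) :
    |θs| ≤ ξ := by
  rcases eq_or_ne θs 0 with h0 | h0
  · simp [h0]; linarith
  have hzs := hz h0
  have hθ : z * |θs| = θs := by
    rw [hzs]
    rcases lt_trichotomy θs 0 with h | h | h
    · rw [Real.sign_of_neg h, abs_of_neg h]; ring
    · exact absurd h h0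
    · rw [Real.sign_of_pos h, abs_of_pos h]; ring
  have hs : |θs| ≤ Real.sqrt (θs ^ 2 + 4 * σ ^ 2) := by
    rw [← Real.sqrt_sq_eq_abs]
    exact Real.sqrt_le_sqrt (by nlinarith)
  have hzabs : |z| = 1 := by
    rw [hzs]
    rcases lt_trichotomy θs 0 with h | h | h
    · simp [Real.sign_of_neg h]
    · exact absurd h h0
    · simp [Real.sign_of_pos h]
  have hv2 : v = z * ((|θs| + Real.sqrt (θs ^ 2 + 4 * σ ^ 2)) / 2) := by
    rw [← heq]
    have h1 : z * z = 1 := by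
      rcases abs_eq (le_of_lt one_pos) |>.mp hzabs with h | h <;> rw [h] <;> ring
    nlinarith [hθ]
  have : |v| = (|θs| + Real.sqrt (θs ^ 2 + 4 * σ ^ 2)) / 2 := by
    rw [hv2, abs_mul, hzabs, one_mul, abs_of_nonneg (by positivity)]
  linarith
end
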